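/- Under the setting of Algorithm 1, assume (A3) and (A4). Then for every k ∈ ℕ: E[‖w_k‖²_{H_k}] ≤ G²/((1−γ)²·h_0^*·s²), where h_0^* := min_{i∈{1,…,d}} h_{0,i}. -/

import Mathlib

open MeasureTheory Finset
open scoped BigOperators

/-- Second assertion of Lemma A.2.  Here `mp k` denotes `m_{k-1}` of the paper
(so `mp 0 = 0`), `w k` is the search direction of Algorithm 1 with
`H_k w_k = -m_k/(1-γ^{k+1})` where `H_k = diag (h k · i)`, assumption (A3) is the
second-moment bound on the stochastic gradients `g k`, and (A4) is the a.s.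
monotonicity of the diagonal entries with deterministic initial entries `h0`.
The `H_k`-norm squared of `u` is `∑ i, h k ω i * (u i)^2`, and
`h0* = min_i h0 i` is formalized as `Finset.univ.inf' _ h0`. -/
theorem lemma_A2_direction_bound
    {Ω : Type*} [MeasurableSpace Ω] (μ : Measure Ω) [IsProbabilityMeasure μ]
    (d n : ℕ) (hd : 0 < d) (hn : 0 < n) (s G : ℝ) (hs : 0 < s) (hG : 0 < G)
    (b γ : ℝ) (hb : 0 ≤ b) (hb1 : b < 1) (hγ : 0 ≤ γ) (hγ1 : γ < 1)
    (α β : ℕ → ℝ) (hα : ∀ k, α k ∈ Set.Ioc (0 : ℝ) 1) (hβ : ∀ k, β k ∈ Set.Icc 0 b)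
    (x w g mp : ℕ → Ω → EuclideanSpace ℝ (Fin d))
    (h : ℕ → Ω → Fin d → ℝ) (h0 : Fin d → ℝ)
    (hpos : ∀ᵐ ω ∂μ, ∀ k i, 0 < h k ω i)
    (hdet : ∀ ω, h 0 ω = h0)
    (hm0 : ∀ ω, mp 0 ω = 0)
    (hmrec : ∀ᵐ ω ∂μ, ∀ k, mp (k + 1) ω = β k • mp k ω + (1 - β k) • g k ω)
    (hwdef : ∀ᵐ ω ∂μ, ∀ k i, h k ω i * w k ω i = -(mp (k + 1) ω i) / (1 - γ ^ (k + 1)))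
    (hxrec : ∀ᵐ ω ∂μ, ∀ k, x (k + 1) ω = x k ω + α k • w k ω)
    -- (A3)
    (hgint : ∀ k, Integrable (fun ω => ‖g k ω‖ ^ 2) μ)
    (hmint : ∀ k, Integrable (fun ω => ‖mp k ω‖ ^ 2) μ)
    (hgbdd : ∀ k, ∫ ω, ‖g k ω‖ ^ 2 ∂μ ≤ G ^ 2 / s ^ 2)
    -- (A4)
    (hA4 : ∀ᵐ ω ∂μ, ∀ k i, h k ω i ≤ h (k + 1) ω i)
    (hwint : ∀ k, Integrable (fun ω => ∑ i, h k ω i * (w k ω i) ^ 2) μ) :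
    ∀ k : ℕ, ∫ ω, (∑ i, h k ω i * (w k ω i) ^ 2) ∂μ
      ≤ G ^ 2 / ((1 - γ) ^ 2 * (Finset.univ.inf' ⟨⟨0, hd⟩, Finset.mem_univ _⟩ h0) * s ^ 2) := by
  set h0s := Finset.univ.inf' ⟨⟨0, hd⟩, Finset.mem_univ _⟩ h0 with hh0s
  -- h0 entries are positive
  obtain ⟨ω0, hω0⟩ := hpos.exists
  have hh0pos : ∀ i, 0 < h0 i := fun i => (hdet ω0) ▸ hω0 0 i
  have hh0spos : 0 < h0s := by
    rw [hh0s]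
    exact (Finset.lt_inf'_iff _).mpr fun i _ => hh0pos i
  have hγpos : 0 < 1 - γ := by linarith
  -- second moment bound for mp
  have hmb : ∀ k, ∫ ω, ‖mp k ω‖ ^ 2 ∂μ ≤ G ^ 2 / s ^ 2 := by
    intro k
    induction k with
    | zero =>
      simp only [hm0, norm_zero]
      simp only [ne_eq, OfNat.ofNat_ne_zero, not_false_eq_true, zero_pow, integral_zero]
      positivity
    | succ k ih =>
      have hβ0 := (hβ k).1
      have hβ1 : β k ≤ 1 := le_trans (hβ k).2 hb1.le
      have hconv : ∀ᵐ ω ∂μ, ‖mp (k + 1) ω‖ ^ 2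
          ≤ β k * ‖mp k ω‖ ^ 2 + (1 - β k) * ‖g k ω‖ ^ 2 := by
        filter_upwards [hmrec] with ω hrec
        rw [hrec k]
        have h1 : ‖β k • mp k ω + (1 - β k) • g k ω‖
            ≤ β k * ‖mp k ω‖ + (1 - β k) * ‖g k ω‖ := by
          refine (norm_add_le _ _).trans ?_
          rw [norm_smul, norm_smul, Real.norm_of_nonneg hβ0,
            Real.norm_of_nonneg (by linarith)]
        have h2 := pow_le_pow_left₀ (norm_nonneg _) h1 2
        nlinarith [sq_nonneg (‖mp k ω‖ - ‖g k ω‖),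
          mul_nonneg hβ0 (sub_nonneg.mpr hβ1)]
      calc ∫ ω, ‖mp (k + 1) ω‖ ^ 2 ∂μ
          ≤ ∫ ω, (β k * ‖mp k ω‖ ^ 2 + (1 - β k) * ‖g k ω‖ ^ 2) ∂μ :=
            integral_mono_ae (hmint (k + 1))
              (((hmint k).const_mul _).add ((hgint k).const_mul _)) hconv
        _ = β k * ∫ ω, ‖mp k ω‖ ^ 2 ∂μ + (1 - β k) * ∫ ω, ‖g k ω‖ ^ 2 ∂μ := by
            rw [integral_add ((hmint k).const_mul _) ((hgint k).const_mul _),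
              integral_const_mul, integral_const_mul]
        _ ≤ β k * (G ^ 2 / s ^ 2) + (1 - β k) * (G ^ 2 / s ^ 2) :=
            add_le_add (mul_le_mul_of_nonneg_left ih hβ0)
              (mul_le_mul_of_nonneg_left (hgbdd k) (by linarith))
        _ = G ^ 2 / s ^ 2 := by ring
  intro k
  -- pointwise bound
  have hcore : ∀ᵐ ω ∂μ, (∑ i, h k ω i * (w k ω i) ^ 2)
      ≤ ‖mp (k + 1) ω‖ ^ 2 / ((1 - γ) ^ 2 * h0s) := by
    filter_upwards [hpos, hwdef, hA4] with ω hp hw hmono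
    have hmon : ∀ j i, h0 i ≤ h j ω i := by
      intro j i
      induction j with
      | zero => rw [hdet]
      | succ j ihj => exact ihj.trans (hmono j i)
    have hγk : (1 - γ) ≤ 1 - γ ^ (k + 1) := by
      have : γ ^ (k + 1) ≤ γ := by
        calc γ ^ (k + 1) ≤ γ ^ 1 := pow_le_pow_of_le_one hγ hγ1.le (by omega)
          _ = γ := pow_one γ
      linarith
    have hnorm : ‖mp (k + 1) ω‖ ^ 2 = ∑ i, (mp (k + 1) ω i) ^ 2 := by
      rw [EuclideanSpace.norm_eq, Real.sq_sqrt (by positivity)]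
      simp [sq_abs]
    rw [hnorm, Finset.sum_div]
    apply Finset.sum_le_sum
    intro i _
    have hhi : 0 < h k ω i := hp k i
    have hw2 : h k ω i * (w k ω i) ^ 2 = (h k ω i * w k ω i) ^ 2 / h k ω i := by
      field_simp
    rw [hw2, hw k i]
    have heq : (-(mp (k + 1) ω i) / (1 - γ ^ (k + 1))) ^ 2 / h k ω i
        = (mp (k + 1) ω i) ^ 2 / ((1 - γ ^ (k + 1)) ^ 2 * h k ω i) := by
      rw [div_pow, neg_sq, div_div]
    rw [heq]
    apply div_le_div_of_nonneg_left (sq_nonneg _) (by positivity)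
    have h1 : h0s ≤ h k ω i := le_trans (Finset.inf'_le _ (Finset.mem_univ i)) (hmon k i)
    have h2 : (1 - γ) ^ 2 ≤ (1 - γ ^ (k + 1)) ^ 2 := by nlinarith
    calc (1 - γ) ^ 2 * h0s ≤ (1 - γ ^ (k + 1)) ^ 2 * h0s :=
          mul_le_mul_of_nonneg_right h2 hh0spos.le
      _ ≤ (1 - γ ^ (k + 1)) ^ 2 * h k ω i :=
          mul_le_mul_of_nonneg_left h1 (by positivity)
  calc ∫ ω, (∑ i, h k ω i * (w k ω i) ^ 2) ∂μ
      ≤ ∫ ω, ‖mp (k + 1) ω‖ ^ 2 / ((1 - γ) ^ 2 * h0s) ∂μ :=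
        integral_mono_ae (hwint k) ((hmint (k + 1)).div_const _) hcore
    _ = (∫ ω, ‖mp (k + 1) ω‖ ^ 2 ∂μ) / ((1 - γ) ^ 2 * h0s) := integral_div _ _
    _ ≤ (G ^ 2 / s ^ 2) / ((1 - γ) ^ 2 * h0s) := by
        exact div_le_div_of_nonneg_right (hmb (k+1)) (by positivity)
    _ = G ^ 2 / ((1 - γ) ^ 2 * h0s * s ^ 2) := by
        rw [div_div]
        ring_nf
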